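/- Let d < n be positive integers and write d ≡ r (mod 2) with r ∈ {0,1}. For every family 𝒜 of subsets of [n] = {1,…,n} such that the VC dimension of 𝒜 △ 𝒜 is at most d, one has |𝒜| ≤ 2^r · Σ_{i=0}^{⌊d/2⌋} C(n−r, i). -/

import Mathlib

/-- A set `Y` is shattered by the family `F` if every subset of `Y`
is the trace of some member of `F` on `Y`. -/
def Shatters {α : Type*} [DecidableEq α] (F : Finset (Finset α)) (Y : Finset α) : Prop :=
  ∀ T ⊆ Y, ∃ S ∈ F, S ∩ Y = T

/-- The VC dimension of a family: the largest cardinality of a shattered set. -/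
noncomputable def vcDim {α : Type*} [DecidableEq α] (F : Finset (Finset α)) : ℕ :=
  sSup {m | ∃ Y : Finset α, Shatters F Y ∧ Y.card = m}

/-- `S₁ △ S₂ △ ⋯ △ S_k` for a `k`-tuple of sets. -/
def symmDiffAll {α : Type*} [DecidableEq α] {k : ℕ} (f : Fin k → Finset α) : Finset α :=
  (List.ofFn f).foldr symmDiff ∅

/-- The `k`-fold symmetric difference family `△𝒜^k`. -/
def symmDiffFam {α : Type*} [DecidableEq α] (k : ℕ) (A : Finset (Finset α)) :
    Finset (Finset α) :=
  (Fintype.piFinset fun _ : Fin k => A).image symmDiffAll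

/-- The family `𝒜₁ △ ⋯ △ 𝒜ₖ`. -/
def symmDiffFamMulti {α : Type*} [DecidableEq α] {k : ℕ} (A : Fin k → Finset (Finset α)) :
    Finset (Finset α) :=
  (Fintype.piFinset A).image symmDiffAll

/-- A family is `k`-wise `(n-d)`-union if any `k` of its members have union of size `≤ d`. -/
def KwiseUnion {α : Type*} [DecidableEq α] (k d : ℕ) (A : Finset (Finset α)) : Prop :=
  ∀ f : Fin k → Finset α, (∀ i, f i ∈ A) → (Finset.univ.sup f).card ≤ d

/-- The `i`-compression of a family. -/
def compress {α : Type*} [DecidableEq α] (i : α) (A : Finset (Finset α)) :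
    Finset (Finset α) :=
  A.image fun S => if S ∈ A ∧ S.erase i ∈ A then S else S.erase i

/-- The `(i,j)`-shift of a family. -/
def shiftIJ {α : Type*} [DecidableEq α] (i j : α) (A : Finset (Finset α)) :
    Finset (Finset α) :=
  A.image fun S => if i ∉ S ∧ j ∈ S ∧ insert i (S.erase j) ∉ A then insert i (S.erase j) else S

/-- `p(n,k,d)`: the maximum size of a `k`-wise `(n-d)`-union family on `[n]`. -/
noncomputable def pMax (n k d : ℕ) : ℕ :=
  sSup {m | ∃ F : Finset (Finset (Fin n)), KwiseUnion k d F ∧ F.card = m}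

namespace SDProof

open Finset

abbrev Fam := Finset (Finset ℕ)

def sdF (A : Fam) : Fam := Finset.image₂ (fun S T => symmDiff S T) A A

lemma mem_sdF {A : Fam} {W : Finset ℕ} :
    W ∈ sdF A ↔ ∃ S ∈ A, ∃ T ∈ A, symmDiff S T = W := by
  simp [sdF]

def NoShat (d : ℕ) (D : Fam) : Prop := ∀ Y : Finset ℕ, _root_.Shatters D Y → Y.card ≤ d
def DC (A : Fam) : Prop := ∀ S ∈ A, ∀ T ⊆ S, T ∈ A
def DCe (A : Fam) : Prop := ∀ S ∈ A, ∀ x, S.erase x ∈ A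
def Shif (A : Fam) : Prop := ∀ S ∈ A, ∀ j ∈ S, ∀ i < j, i ∉ S → insert i (S.erase j) ∈ A
def UB (d : ℕ) (A : Fam) : Prop := ∀ S ∈ A, ∀ T ∈ A, (S ∪ T).card ≤ d
def Grnd (n : ℕ) (A : Fam) : Prop := ∀ S ∈ A, S ⊆ Finset.range n

lemma DCe_DC {A : Fam} (h : DCe A) : DC A := by
  have key : ∀ (k : ℕ) (S T : Finset ℕ), S ∈ A → T ⊆ S → (S \ T).card ≤ k → T ∈ A := by
    intro k
    induction k with
    | zero =>
      intro S T hS hTS hc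
      have h0 : S \ T = ∅ := card_eq_zero.1 (Nat.le_zero.1 hc)
      have hST : S ⊆ T := by
        intro a ha
        by_contra ha'
        exact (notMem_empty a) (h0 ▸ mem_sdiff.2 ⟨ha, ha'⟩)
      exact (Subset.antisymm hTS hST) ▸ hS
    | succ k ih =>
      intro S T hS hTS hc
      by_cases hST : S \ T = ∅
      · have hST' : S ⊆ T := by
          intro a ha
          by_contra ha'
          exact (notMem_empty a) (hST ▸ mem_sdiff.2 ⟨ha, ha'⟩)
        exact (Subset.antisymm hTS hST') ▸ hS
      · obtain ⟨x, hx⟩ := nonempty_iff_ne_empty.2 hST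
        have hxS : x ∈ S := (mem_sdiff.1 hx).1
        have hxT : x ∉ T := (mem_sdiff.1 hx).2
        have hpos : 0 < (S \ T).card := card_pos.2 ⟨x, hx⟩
        apply ih (S.erase x) T (h S hS x) (subset_erase.2 ⟨hTS, hxT⟩)
        have he : (S.erase x) \ T = (S \ T).erase x := by
          ext a; simp only [mem_sdiff, mem_erase]; tauto
        rw [he, card_erase_of_mem hx]
        omega
  intro S hS T hTS
  exact key (S \ T).card S T hS hTS le_rfl

/-! ### Down-compression -/

def dcf (i : ℕ) (A : Fam) : Finset ℕ → Finset ℕ :=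
  fun S => if S.erase i ∈ A then S else S.erase i

def dcomp (i : ℕ) (A : Fam) : Fam := A.image (dcf i A)

lemma dcomp_mem_i {i : ℕ} {A : Fam} {U : Finset ℕ} (hU : U ∈ dcomp i A) (hi : i ∈ U) :
    U ∈ A ∧ U.erase i ∈ A := by
  obtain ⟨S, hS, hSU⟩ := mem_image.1 hU
  by_cases h : S.erase i ∈ A
  · simp only [dcf, if_pos h] at hSU
    subst hSU; exact ⟨hS, h⟩
  · simp only [dcf, if_neg h] at hSU
    subst hSU; exact absurd hi (notMem_erase _ _)

lemma dcomp_mem_no_i {i : ℕ} {A : Fam} {U : Finset ℕ} (hU : U ∈ dcomp i A) (hi : i ∉ U) :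
    U ∈ A ∨ insert i U ∈ A := by
  obtain ⟨S, hS, hSU⟩ := mem_image.1 hU
  by_cases h : S.erase i ∈ A
  · simp only [dcf, if_pos h] at hSU; subst hSU; exact Or.inl hS
  · simp only [dcf, if_neg h] at hSU
    subst hSU
    by_cases hiS : i ∈ S
    · right; rw [insert_erase hiS]; exact hS
    · left; rwa [erase_eq_of_notMem hiS]

lemma dcf_injOn (i : ℕ) (A : Fam) : Set.InjOn (dcf i A) A := by
  intro S hS T hT hST
  unfold dcf at hST
  split_ifs at hST with h1 h2 h2
  · exact hST
  · exfalso; exact h2 (hST ▸ hS)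
  · exfalso; rw [← hST] at hT; exact h1 hT
  · have hiS : i ∈ S := by
      by_contra hi; rw [erase_eq_of_notMem hi] at h1; exact h1 hS
    have hiT : i ∈ T := by
      by_contra hi; rw [erase_eq_of_notMem hi] at h2; exact h2 hT
    rw [← insert_erase hiS, ← insert_erase hiT, hST]

lemma dcomp_card (i : ℕ) (A : Fam) : (dcomp i A).card = A.card :=
  card_image_of_injOn (dcf_injOn i A)

lemma dcomp_grnd {i : ℕ} {n : ℕ} {A : Fam} (h : Grnd n A) : Grnd n (dcomp i A) := by
  intro U hU
  obtain ⟨S, hS, hSU⟩ := mem_image.1 hU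
  have : dcf i A S ⊆ S := by
    unfold dcf; split_ifs
    · exact Subset.refl _
    · exact erase_subset _ _
  exact (hSU ▸ this).trans (h S hS)

lemma dcomp_msize {i : ℕ} {A : Fam} : ∑ U ∈ dcomp i A, U.card = ∑ S ∈ A, (dcf i A S).card := by
  apply Finset.sum_image
  intro x hx y hy hxy
  exact dcf_injOn i A hx hy hxy

lemma dcf_card_le (i : ℕ) (A : Fam) (S : Finset ℕ) : (dcf i A S).card ≤ S.card := by
  unfold dcf; split_ifs
  · exact le_rfl
  · exact card_le_card (erase_subset _ _)

lemma symmDiff_erase_left {i : ℕ} {U V : Finset ℕ} (h1 : i ∈ U) (h2 : i ∉ V) :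
    symmDiff (U.erase i) V = (symmDiff U V).erase i := by
  ext a
  by_cases ha : a = i
  · subst ha; simp [mem_symmDiff, h1, h2]
  · simp [mem_symmDiff, mem_erase, ha]

lemma symmDiff_insert_right {i : ℕ} {U V : Finset ℕ} (h1 : i ∈ U) (h2 : i ∉ V) :
    symmDiff U (insert i V) = (symmDiff U V).erase i := by
  ext a
  by_cases ha : a = i
  · subst ha; simp [mem_symmDiff, h1, h2]
  · simp [mem_symmDiff, mem_erase, mem_insert, ha]

lemma symmDiff_erase_insert {i : ℕ} {U V : Finset ℕ} (h1 : i ∈ U) (h2 : i ∉ V) :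
    symmDiff (U.erase i) (insert i V) = symmDiff U V := by
  ext a
  by_cases ha : a = i
  · subst ha; simp [mem_symmDiff, h1, h2]
  · simp [mem_symmDiff, mem_erase, mem_insert, ha]

lemma dcomp_traces {i : ℕ} {A : Fam} {Y T U₁ U₂ : Finset ℕ}
    (hU₁ : U₁ ∈ dcomp i A) (hU₂ : U₂ ∈ dcomp i A)
    (h1 : i ∈ U₁) (h2 : i ∉ U₂)
    (htr : (symmDiff U₁ U₂) ∩ Y = insert i T) (hiT : i ∉ T) :
    (∃ S ∈ sdF A, S ∩ Y = T) ∧ (∃ S ∈ sdF A, S ∩ Y = insert i T) := by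
  obtain ⟨hU₁A, hU₁e⟩ := dcomp_mem_i hU₁ h1
  have htr_erase : ((symmDiff U₁ U₂).erase i) ∩ Y = T := by
    ext a
    constructor
    · intro ha
      obtain ⟨haW, haY⟩ := mem_inter.1 ha
      have hai : a ≠ i := (mem_erase.1 haW).1
      have : a ∈ insert i T := htr ▸ mem_inter.2 ⟨(mem_erase.1 haW).2, haY⟩
      exact (mem_insert.1 this).resolve_left hai
    · intro ha
      have hai : a ≠ i := fun h => hiT (h ▸ ha)
      have haW : a ∈ symmDiff U₁ U₂ ∩ Y := by
        rw [htr]; exact mem_insert_of_mem ha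
      exact mem_inter.2 ⟨mem_erase.2 ⟨hai, (mem_inter.1 haW).1⟩, (mem_inter.1 haW).2⟩
  rcases dcomp_mem_no_i hU₂ h2 with hU₂A | hU₂A
  · constructor
    · exact ⟨_, mem_sdF.2 ⟨U₁.erase i, hU₁e, U₂, hU₂A, rfl⟩,
        by rw [symmDiff_erase_left h1 h2]; exact htr_erase⟩
    · exact ⟨_, mem_sdF.2 ⟨U₁, hU₁A, U₂, hU₂A, rfl⟩, htr⟩
  · constructor
    · exact ⟨_, mem_sdF.2 ⟨U₁, hU₁A, insert i U₂, hU₂A, rfl⟩,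
        by rw [symmDiff_insert_right h1 h2]; exact htr_erase⟩
    · exact ⟨_, mem_sdF.2 ⟨U₁.erase i, hU₁e, insert i U₂, hU₂A, rfl⟩,
        by rw [symmDiff_erase_insert h1 h2]; exact htr⟩

lemma dcomp_shat {i : ℕ} {A : Fam} {Y : Finset ℕ}
    (h : _root_.Shatters (sdF (dcomp i A)) Y) : _root_.Shatters (sdF A) Y := by
  by_cases hiY : i ∈ Y
  · have key : ∀ T ⊆ Y, i ∉ T →
        (∃ S ∈ sdF A, S ∩ Y = T) ∧ (∃ S ∈ sdF A, S ∩ Y = insert i T) := by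
      intro T hTY hiT
      obtain ⟨W, hW, hWtr⟩ := h (insert i T) (insert_subset hiY hTY)
      obtain ⟨U₁, hU₁, U₂, hU₂, rfl⟩ := mem_sdF.1 hW
      have hiW : i ∈ symmDiff U₁ U₂ := by
        have : i ∈ symmDiff U₁ U₂ ∩ Y := by
          rw [hWtr]; exact mem_insert_self i T
        exact (mem_inter.1 this).1
      rcases mem_symmDiff.1 hiW with ⟨hi1, hi2⟩ | ⟨hi2, hi1⟩
      · exact dcomp_traces hU₁ hU₂ hi1 hi2 hWtr hiT
      · exact dcomp_traces hU₂ hU₁ hi2 hi1 (by rwa [symmDiff_comm]) hiT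
    intro T hTY
    by_cases hiT : i ∈ T
    · have h2 := (key (T.erase i) ((erase_subset _ _).trans hTY) (notMem_erase _ _)).2
      rwa [insert_erase hiT] at h2
    · exact (key T hTY hiT).1
  · intro T hTY
    obtain ⟨W, hW, hWtr⟩ := h T hTY
    obtain ⟨U₁, hU₁, U₂, hU₂, rfl⟩ := mem_sdF.1 hW
    have rep : ∀ U, U ∈ dcomp i A → ∃ V ∈ A, ∀ a, a ≠ i → (a ∈ V ↔ a ∈ U) := by
      intro U hU
      by_cases hi : i ∈ U
      · exact ⟨U, (dcomp_mem_i hU hi).1, fun a _ => Iff.rfl⟩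
      · rcases dcomp_mem_no_i hU hi with h' | h'
        · exact ⟨U, h', fun a _ => Iff.rfl⟩
        · exact ⟨insert i U, h', fun a ha => by simp [mem_insert, ha]⟩
    obtain ⟨V₁, hV₁, hV₁e⟩ := rep U₁ hU₁
    obtain ⟨V₂, hV₂, hV₂e⟩ := rep U₂ hU₂
    refine ⟨symmDiff V₁ V₂, mem_sdF.2 ⟨V₁, hV₁, V₂, hV₂, rfl⟩, ?_⟩
    rw [← hWtr]
    ext a
    simp only [mem_inter, mem_symmDiff]
    constructor
    · rintro ⟨hs, hy⟩
      have hai : a ≠ i := fun h => hiY (h ▸ hy)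
      rw [hV₁e a hai, hV₂e a hai] at hs
      exact ⟨hs, hy⟩
    · rintro ⟨hs, hy⟩
      have hai : a ≠ i := fun h => hiY (h ▸ hy)
      rw [← hV₁e a hai, ← hV₂e a hai] at hs
      exact ⟨hs, hy⟩

lemma dcomp_noshat {i d : ℕ} {A : Fam} (h : NoShat d (sdF A)) : NoShat d (sdF (dcomp i A)) :=
  fun Y hY => h Y (dcomp_shat hY)

lemma toDC (N : ℕ) : ∀ (A : Fam) (d n : ℕ), (∑ S ∈ A, S.card) ≤ N → NoShat d (sdF A) → Grnd n A →
    ∃ B : Fam, DC B ∧ B.card = A.card ∧ NoShat d (sdF B) ∧ Grnd n B := by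
  induction N using Nat.strong_induction_on with
  | _ N IH =>
  intro A d n hm hNS hG
  by_cases hA : ∀ S ∈ A, ∀ x, S.erase x ∈ A
  · exact ⟨A, DCe_DC hA, rfl, hNS, hG⟩
  · push_neg at hA
    obtain ⟨S₀, hS₀, x, hx⟩ := hA
    have hxS : x ∈ S₀ := by
      by_contra h
      rw [erase_eq_of_notMem h] at hx
      exact hx hS₀
    have hlt : ∑ U ∈ dcomp x A, U.card < ∑ S ∈ A, S.card := by
      rw [dcomp_msize]
      apply sum_lt_sum (fun S _ => dcf_card_le x A S)
      refine ⟨S₀, hS₀, ?_⟩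
      unfold dcf
      rw [if_neg hx]
      have h1 := card_erase_of_mem hxS
      have hpos := card_pos.2 ⟨x, hxS⟩
      omega
    have hNle : ∑ U ∈ dcomp x A, U.card < N := lt_of_lt_of_le hlt hm
    obtain ⟨B, h1, h2, h3, h4⟩ := IH (∑ U ∈ dcomp x A, U.card) hNle (dcomp x A) d n le_rfl
      (dcomp_noshat hNS) (dcomp_grnd hG)
    exact ⟨B, h1, h2.trans (dcomp_card x A), h3, h4⟩

lemma dc_ub {A : Fam} {d : ℕ} (hDC : DC A) (hNS : NoShat d (sdF A)) : UB d A := by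
  intro S hS T hT
  apply hNS (S ∪ T)
  intro R hR
  have h1 : R ∩ S ∈ A := hDC S hS _ inter_subset_right
  have h2 : R \ S ∈ A := by
    apply hDC T hT
    intro a ha
    rcases mem_union.1 (hR (mem_sdiff.1 ha).1) with h | h
    · exact absurd h (mem_sdiff.1 ha).2
    · exact h
  refine ⟨symmDiff (R ∩ S) (R \ S), mem_sdF.2 ⟨_, h1, _, h2, rfl⟩, ?_⟩
  have hsd : symmDiff (R ∩ S) (R \ S) = R := by
    ext a
    simp only [mem_symmDiff, mem_inter, mem_sdiff]
    by_cases haS : a ∈ S <;> tauto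
  rw [hsd]
  exact inter_eq_left.2 hR

/-! ### Left shifting -/

def shf (i j : ℕ) (A : Fam) : Finset ℕ → Finset ℕ :=
  fun S => if j ∈ S ∧ i ∉ S ∧ insert i (S.erase j) ∉ A then insert i (S.erase j) else S

def shift (i j : ℕ) (A : Fam) : Fam := A.image (shf i j A)

lemma shf_injOn (i j : ℕ) (hij : i ≠ j) (A : Fam) : Set.InjOn (shf i j A) A := by
  intro S hS T hT hST
  unfold shf at hST
  split_ifs at hST with h1 h2 h2
  · obtain ⟨hjS, hiS, _⟩ := h1
    obtain ⟨hjT, hiT, _⟩ := h2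
    have hi1 : i ∉ S.erase j := fun h => hiS (mem_of_mem_erase h)
    have hi2 : i ∉ T.erase j := fun h => hiT (mem_of_mem_erase h)
    have e1 : S.erase j = T.erase j := by
      rw [← erase_insert hi1, ← erase_insert hi2, hST]
    rw [← insert_erase hjS, ← insert_erase hjT, e1]
  · obtain ⟨_, _, hnot⟩ := h1
    rw [← hST] at hT
    exact absurd hT hnot
  · obtain ⟨_, _, hnot⟩ := h2
    rw [hST] at hS
    exact absurd hS hnot
  · exact hST

lemma shift_card {i j : ℕ} (hij : i ≠ j) (A : Fam) : (shift i j A).card = A.card :=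
  card_image_of_injOn (shf_injOn i j hij A)

lemma shift_grnd {i j n : ℕ} {A : Fam} (hin : i < n) (h : Grnd n A) : Grnd n (shift i j A) := by
  intro U hU
  obtain ⟨S, hS, rfl⟩ := mem_image.1 hU
  unfold shf
  split_ifs with hc
  · intro a ha
    rcases mem_insert.1 ha with rfl | ha'
    · exact mem_range.2 hin
    · exact h S hS (mem_of_mem_erase ha')
  · exact h S hS

lemma shf_ub_aux {i j d : ℕ} {A : Fam} (hUB : UB d A) (hij : i ≠ j)
    {S T : Finset ℕ} (hS : S ∈ A) (hT : T ∈ A)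
    (hc : j ∈ S ∧ i ∉ S ∧ insert i (S.erase j) ∉ A)
    (hTun : ¬(j ∈ T ∧ i ∉ T ∧ insert i (T.erase j) ∉ A)) :
    (insert i (S.erase j) ∪ T).card ≤ d := by
  obtain ⟨hjS, hiS, _⟩ := hc
  have hji : j ≠ i := fun h => hij h.symm
  by_cases hjT : j ∈ T
  · by_cases hiT : i ∈ T
    · have hsub : insert i (S.erase j) ∪ T ⊆ S ∪ T := by
        intro a ha
        rcases mem_union.1 ha with h | h
        · rcases mem_insert.1 h with rfl | h'
          · exact mem_union_right _ hiT
          · exact mem_union_left _ (mem_of_mem_erase h')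
        · exact mem_union_right _ h
      exact le_trans (card_le_card hsub) (hUB S hS T hT)
    · have hT' : insert i (T.erase j) ∈ A := by
        by_contra hn
        exact hTun ⟨hjT, hiT, hn⟩
      have hid : insert i (S.erase j) ∪ T = S ∪ insert i (T.erase j) := by
        ext a
        simp only [mem_union, mem_insert, mem_erase]
        by_cases hai : a = i
        · subst hai; tauto
        · by_cases haj : a = j
          · subst haj; tauto
          · tauto
      rw [hid]
      exact hUB S hS _ hT'
  · have hid : insert i (S.erase j) ∪ T = insert i ((S ∪ T).erase j) := by
      ext a
      simp only [mem_union, mem_insert, mem_erase]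
      by_cases hai : a = i
      · subst hai; tauto
      · by_cases haj : a = j
        · subst haj; tauto
        · tauto
    rw [hid]
    have h1 : ((S ∪ T).erase j).card = (S ∪ T).card - 1 :=
      card_erase_of_mem (mem_union_left _ hjS)
    have h2 := card_insert_le i ((S ∪ T).erase j)
    have h3 := hUB S hS T hT
    have hpos : 0 < (S ∪ T).card := card_pos.2 ⟨j, mem_union_left _ hjS⟩
    omega

lemma shift_ub {i j d : ℕ} {A : Fam} (hij : i ≠ j) (hUB : UB d A) : UB d (shift i j A) := by
  intro U hU V hV
  obtain ⟨S, hS, rfl⟩ := mem_image.1 hU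
  obtain ⟨T, hT, rfl⟩ := mem_image.1 hV
  unfold shf
  by_cases h1 : j ∈ S ∧ i ∉ S ∧ insert i (S.erase j) ∉ A
  · by_cases h2 : j ∈ T ∧ i ∉ T ∧ insert i (T.erase j) ∉ A
    · rw [if_pos h1, if_pos h2]
      obtain ⟨hjS, hiS, _⟩ := h1
      obtain ⟨hjT, hiT, _⟩ := h2
      have hid : insert i (S.erase j) ∪ insert i (T.erase j) = insert i ((S ∪ T).erase j) := by
        ext a
        simp only [mem_union, mem_insert, mem_erase]
        tauto
      rw [hid]
      have ha : ((S ∪ T).erase j).card = (S ∪ T).card - 1 :=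
        card_erase_of_mem (mem_union_left _ hjS)
      have hb := card_insert_le i ((S ∪ T).erase j)
      have hc := hUB S hS T hT
      have hpos : 0 < (S ∪ T).card := card_pos.2 ⟨j, mem_union_left _ hjS⟩
      omega
    · rw [if_pos h1, if_neg h2]
      exact shf_ub_aux hUB hij hS hT h1 h2
  · by_cases h2 : j ∈ T ∧ i ∉ T ∧ insert i (T.erase j) ∉ A
    · rw [if_neg h1, if_pos h2, union_comm]
      exact shf_ub_aux hUB hij hT hS h2 h1
    · rw [if_neg h1, if_neg h2]
      exact hUB S hS T hT

lemma shift_dce {i j : ℕ} {A : Fam} (hij : i < j) (hDC : DC A) : DCe (shift i j A) := by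
  have hij' : i ≠ j := Nat.ne_of_lt hij
  intro U hU x
  by_cases hxU : x ∈ U
  swap
  · rwa [erase_eq_of_notMem hxU]
  obtain ⟨S, hS, rfl⟩ := mem_image.1 hU
  by_cases h1 : j ∈ S ∧ i ∉ S ∧ insert i (S.erase j) ∉ A
  · -- moved case
    obtain ⟨hjS, hiS, hnot⟩ := h1
    have hfS : shf i j A S = insert i (S.erase j) := by
      unfold shf; rw [if_pos ⟨hjS, hiS, hnot⟩]
    rw [hfS] at hxU ⊢
    by_cases hxi : x = i
    · obtain rfl : i = x := hxi.symm
      have hi1 : i ∉ S.erase j := fun h => hiS (mem_of_mem_erase h)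
      rw [erase_insert hi1]
      have hmem : S.erase j ∈ A := hDC S hS _ (erase_subset _ _)
      refine mem_image.2 ⟨S.erase j, hmem, ?_⟩
      unfold shf
      rw [if_neg (fun hc => (notMem_erase j S) hc.1)]
    · have hxS : x ∈ S.erase j := by
        rcases mem_insert.1 hxU with h | h
        · exact absurd h hxi
        · exact h
      have hxj : x ≠ j := (mem_erase.1 hxS).1
      have hxSmem : x ∈ S := (mem_erase.1 hxS).2
      have hS₂ : S.erase x ∈ A := hDC S hS _ (erase_subset _ _)
      have hjS₂ : j ∈ S.erase x := mem_erase.2 ⟨fun h => hxj h.symm, hjS⟩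
      have hiS₂ : i ∉ S.erase x := fun h => hiS (mem_of_mem_erase h)
      have hix : i ≠ x := fun h => hxi h.symm
      have hid : (insert i (S.erase j)).erase x = insert i ((S.erase x).erase j) := by
        ext a
        simp only [mem_erase, mem_insert]
        by_cases hai : a = i
        · subst hai; simp [hix]
        · simp only [hai, false_or]
          tauto
      rw [hid]
      by_cases hW : insert i ((S.erase x).erase j) ∈ A
      · refine mem_image.2 ⟨insert i ((S.erase x).erase j), hW, ?_⟩
        unfold shf
        rw [if_neg (fun hc => hc.2.1 (mem_insert_self _ _))]
      · refine mem_image.2 ⟨S.erase x, hS₂, ?_⟩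
        unfold shf
        rw [if_pos ⟨hjS₂, hiS₂, hW⟩]
  · -- unmoved case
    have hfS : shf i j A S = S := by unfold shf; rw [if_neg h1]
    rw [hfS] at hxU ⊢
    have hmem : S.erase x ∈ A := hDC S hS _ (erase_subset _ _)
    have hncond : ¬(j ∈ S.erase x ∧ i ∉ S.erase x ∧ insert i ((S.erase x).erase j) ∉ A) := by
      rintro ⟨hj', hi', hn'⟩
      have hjS : j ∈ S := mem_of_mem_erase hj'
      by_cases hiS : i ∈ S
      · have hxi : x = i := by
          by_contra hxi
          exact hi' (mem_erase.2 ⟨fun h => hxi h.symm, hiS⟩)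
        obtain rfl : i = x := hxi.symm
        have hiSj : i ∈ S.erase j := mem_erase.2 ⟨hij', hiS⟩
        have hid2 : insert i ((S.erase i).erase j) = S.erase j := by
          rw [erase_right_comm, insert_erase hiSj]
        rw [hid2] at hn'
        exact hn' (hDC S hS _ (erase_subset _ _))
      · have hSA : insert i (S.erase j) ∈ A := by
          by_contra hn
          exact h1 ⟨hjS, hiS, hn⟩
        have hxi : x ≠ i := fun h => hiS (h ▸ hxU)
        have hid2 : insert i ((S.erase x).erase j) = (insert i (S.erase j)).erase x := by
          rw [erase_right_comm]
          rw [Finset.erase_insert_of_ne (fun h => hxi h.symm)]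
        rw [hid2] at hn'
        exact hn' (hDC _ hSA _ (erase_subset _ _))
    refine mem_image.2 ⟨S.erase x, hmem, ?_⟩
    unfold shf
    rw [if_neg hncond]

lemma toShift (N : ℕ) : ∀ (A : Fam) (d n : ℕ), (∑ S ∈ A, ∑ x ∈ S, x) ≤ N →
    DC A → UB d A → Grnd n A →
    ∃ B : Fam, Shif B ∧ DC B ∧ B.card = A.card ∧ UB d B ∧ Grnd n B := by
  induction N using Nat.strong_induction_on with
  | _ N IH =>
  intro A d n hm hDC hUB hG
  by_cases hA : ∀ S ∈ A, ∀ j ∈ S, ∀ i < j, i ∉ S → insert i (S.erase j) ∈ A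
  · exact ⟨A, hA, hDC, rfl, hUB, hG⟩
  · push_neg at hA
    obtain ⟨S₀, hS₀, j, hj, i, hij, hiS, hnot⟩ := hA
    have hij' : i ≠ j := Nat.ne_of_lt hij
    have hjn : j < n := mem_range.1 (hG S₀ hS₀ hj)
    have hin : i < n := lt_trans hij hjn
    have hsum_eq : ∑ U ∈ shift i j A, (∑ x ∈ U, x) = ∑ S ∈ A, (∑ x ∈ shf i j A S, x) :=
      sum_image (fun x hx y hy h => shf_injOn i j hij' A hx hy h)
    have hterm : ∀ S ∈ A, (∑ x ∈ shf i j A S, x) ≤ ∑ x ∈ S, x := by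
      intro S _
      unfold shf
      split_ifs with hc
      · obtain ⟨hjS, hiS', _⟩ := hc
        have hi1 : i ∉ S.erase j := fun h => hiS' (mem_of_mem_erase h)
        rw [Finset.sum_insert hi1]
        have he : (∑ x ∈ S.erase j, x) + j = ∑ x ∈ S, x :=
          Finset.sum_erase_add S _ hjS
        omega
      · exact le_rfl
    have hlt : ∑ U ∈ shift i j A, (∑ x ∈ U, x) < ∑ S ∈ A, ∑ x ∈ S, x := by
      rw [hsum_eq]
      apply sum_lt_sum hterm
      refine ⟨S₀, hS₀, ?_⟩
      unfold shf
      rw [if_pos ⟨hj, hiS, hnot⟩]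
      have hi1 : i ∉ S₀.erase j := fun h => hiS (mem_of_mem_erase h)
      rw [Finset.sum_insert hi1]
      have he : (∑ x ∈ S₀.erase j, x) + j = ∑ x ∈ S₀, x :=
        Finset.sum_erase_add S₀ _ hj
      omega
    obtain ⟨B, b1, b2, b3, b4, b5⟩ := IH (∑ U ∈ shift i j A, (∑ x ∈ U, x))
      (lt_of_lt_of_le hlt hm) (shift i j A) d n le_rfl
      (DCe_DC (shift_dce hij hDC)) (shift_ub hij' hUB) (shift_grnd hin hG)
    exact ⟨B, b1, b2, b3.trans (shift_card hij' A), b4, b5⟩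

/-! ### The Kleitman-type bound -/

def Kb (n d : ℕ) : ℕ := 2 ^ (d % 2) * ∑ i ∈ Finset.range (d / 2 + 1), (n - d % 2).choose i

lemma sum_choose_succ (m e : ℕ) :
    ∑ i ∈ Finset.range (e + 1), (m + 1).choose i
      = ∑ i ∈ Finset.range (e + 1), m.choose i + ∑ i ∈ Finset.range e, m.choose i := by
  induction e with
  | zero => simp
  | succ e ih =>
    have h1 : ∑ i ∈ Finset.range (e + 1 + 1), (m + 1).choose i
        = (∑ i ∈ Finset.range (e + 1), (m + 1).choose i) + (m + 1).choose (e + 1) :=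
      Finset.sum_range_succ _ _
    have h2 : ∑ i ∈ Finset.range (e + 1 + 1), m.choose i
        = (∑ i ∈ Finset.range (e + 1), m.choose i) + m.choose (e + 1) :=
      Finset.sum_range_succ _ _
    have h3 : ∑ i ∈ Finset.range (e + 1), m.choose i
        = (∑ i ∈ Finset.range e, m.choose i) + m.choose e :=
      Finset.sum_range_succ _ _
    have h4 : (m + 1).choose (e + 1) = m.choose e + m.choose (e + 1) :=
      Nat.choose_succ_succ m e
    omega

lemma Kb_rec {n d : ℕ} (hd : 2 ≤ d) (hn : d + 2 ≤ n) :
    Kb n d = Kb (n - 1) d + Kb (n - 1) (d - 2) := by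
  have h1 : (d - 2) % 2 = d % 2 := by omega
  have h2 : (d - 2) / 2 = d / 2 - 1 := by omega
  have h3 : 1 ≤ d / 2 := by
    rcases Nat.even_or_odd d with ⟨e, he⟩ | ⟨e, he⟩ <;> omega
  unfold Kb
  rw [h1, h2]
  have h4 : n - 1 - d % 2 = n - d % 2 - 1 := by omega
  rw [h4]
  have h5 : d % 2 < 2 := Nat.mod_lt _ (by norm_num)
  obtain ⟨m, hm⟩ := Nat.exists_eq_succ_of_ne_zero (show n - d % 2 ≠ 0 by omega)
  obtain ⟨e, he⟩ := Nat.exists_eq_succ_of_ne_zero (show d / 2 ≠ 0 by omega)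
  rw [hm, he]
  have h6 : m + 1 - 1 = m := by omega
  have h7 : e + 1 - 1 + 1 = e + 1 := by omega
  rw [h6, h7]
  rw [sum_choose_succ m (e + 1)]
  ring

lemma Kb_pred {n : ℕ} (hn : 1 ≤ n) : Kb n (n - 1) = 2 ^ (n - 1) := by
  rcases Nat.even_or_odd (n - 1) with ⟨e, he⟩ | ⟨e, he⟩
  · have h1 : (n - 1) % 2 = 0 := by omega
    have h2 : (n - 1) / 2 = e := by omega
    have h3 : n - (n - 1) % 2 = 2 * e + 1 := by omega
    have h4 : n - 1 = 2 * e := by omega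
    unfold Kb
    rw [h1, h2]
    have h3' : n - 0 = 2 * e + 1 := by omega
    rw [h3', Nat.sum_range_choose_halfway e, h4]
    rw [pow_zero, one_mul, show (4 : ℕ) = 2 ^ 2 by norm_num, ← pow_mul]
  · have h1 : (n - 1) % 2 = 1 := by omega
    have h2 : (n - 1) / 2 = e := by omega
    have h3 : n - (n - 1) % 2 = 2 * e + 1 := by omega
    have h4 : n - 1 = 2 * e + 1 := by omega
    unfold Kb
    rw [h1, h2, h4]
    have h3' : n - 1 = 2 * e + 1 := h4
    rw [Nat.sum_range_choose_halfway e]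
    rw [pow_one, show (4 : ℕ) = 2 ^ 2 by norm_num, ← pow_mul, ← pow_succ']

lemma core : ∀ n d (A : Fam), d < n → Grnd n A → DC A → Shif A → UB d A →
    A.card ≤ Kb n d := by
  intro n
  induction n using Nat.strong_induction_on with
  | _ n IH =>
  intro d A hdn hG hDC hSh hUB
  by_cases hbase : d + 1 = n
  · -- base case d = n - 1 : complement pairing
    subst hbase
    have hinj : Set.InjOn (fun S => Finset.range (d + 1) \ S) A := by
      intro S hS T hT hST
      simp only at hST
      have h1 := congrArg (fun X => Finset.range (d + 1) \ X) hST
      rwa [Finset.sdiff_sdiff_eq_self (hG S hS), Finset.sdiff_sdiff_eq_self (hG T hT)] at h1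
    have hdisj : Disjoint A (A.image (fun S => Finset.range (d + 1) \ S)) := by
      rw [Finset.disjoint_left]
      intro S hSA hSim
      obtain ⟨T, hT, hTS⟩ := mem_image.1 hSim
      have hUT := hUB S hSA T hT
      have hTr : T ⊆ Finset.range (d + 1) := hG T hT
      have hST : S ∪ T = Finset.range (d + 1) := by
        rw [← hTS]
        exact sdiff_union_of_subset hTr
      rw [hST, card_range] at hUT
      omega
    have hcardim : (A.image (fun S => Finset.range (d + 1) \ S)).card = A.card :=
      card_image_of_injOn hinj
    have hsub : A ∪ A.image (fun S => Finset.range (d + 1) \ S)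
        ⊆ (Finset.range (d + 1)).powerset := by
      intro S hS
      rcases mem_union.1 hS with h | h
      · exact mem_powerset.2 (hG S h)
      · obtain ⟨T, hT, hTS⟩ := mem_image.1 h
        refine mem_powerset.2 ?_
        rw [← hTS]
        exact sdiff_subset
    have hcard : A.card + A.card ≤ 2 ^ (d + 1) := by
      have h1 := card_le_card hsub
      rw [card_union_of_disjoint hdisj, card_powerset, card_range, hcardim] at h1
      omega
    have hKb := Kb_pred (n := d + 1) (by omega)
    have h2 : d + 1 - 1 = d := by omega
    rw [h2] at hKb
    rw [hKb]
    have h3 : (2 : ℕ) ^ (d + 1) = 2 * 2 ^ d := by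
      rw [pow_succ]; ring
    omega
  · have hdn2 : d + 2 ≤ n := by omega
    rcases Nat.lt_or_ge d 2 with hd2 | hd2
    · -- d = 0 or d = 1
      interval_cases d
      · -- d = 0
        have hsub : A ⊆ {∅} := by
          intro S hS
          have h1 := hUB S hS S hS
          rw [union_self] at h1
          simp only [mem_singleton]
          exact card_eq_zero.1 (Nat.le_zero.1 h1)
        have := card_le_card hsub
        rw [card_singleton] at this
        refine le_trans this ?_
        simp [Kb]
      · -- d = 1
        have hKb1 : Kb n 1 = 2 := by simp [Kb]
        rw [hKb1]
        by_cases hne : ∃ S ∈ A, S ≠ ∅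
        · obtain ⟨S₀, hS₀, hS₀ne⟩ := hne
          have hsub : A ⊆ {∅, S₀} := by
            intro T hT
            by_cases hTe : T = ∅
            · simp [hTe]
            · have h1 := hUB T hT S₀ hS₀
              have hTU : T ⊆ T ∪ S₀ := subset_union_left
              have hSU : S₀ ⊆ T ∪ S₀ := subset_union_right
              have hTpos := card_pos.2 (nonempty_iff_ne_empty.2 hTe)
              have hSpos := card_pos.2 (nonempty_iff_ne_empty.2 hS₀ne)
              have hT1 := card_le_card hTU
              have hS1 := card_le_card hSU
              have e1 : T = T ∪ S₀ := eq_of_subset_of_card_le hTU (by omega)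
              have e2 : S₀ = T ∪ S₀ := eq_of_subset_of_card_le hSU (by omega)
              have hTS0 : T = S₀ := e1.trans e2.symm
              simp [hTS0]
          refine le_trans (card_le_card hsub) ?_
          refine le_trans (card_insert_le _ _) ?_
          simp
        · push_neg at hne
          have hsub : A ⊆ {∅} := fun S hS => mem_singleton.2 (hne S hS)
          have := card_le_card hsub
          rw [card_singleton] at this
          omega
    · -- main case : d ≥ 2, split on element n - 1
      have hn2 : 2 ≤ n := by omega
      set t := n - 1 with ht
      have htn : t < n := by omega
      set A0 := A.filter (fun S => t ∉ S) with hA0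
      set A1 := A.filter (fun S => t ∈ S) with hA1
      set A1' := A1.image (fun S => S.erase t) with hA1'
      have hsplit : A1.card + A0.card = A.card := by
        rw [hA0, hA1]
        exact card_filter_add_card_filter_not _
      have hA1'mem : ∀ T, T ∈ A1' ↔ t ∉ T ∧ insert t T ∈ A := by
        intro T
        constructor
        · intro hT
          obtain ⟨S, hS, rfl⟩ := mem_image.1 hT
          have hSA := (mem_filter.1 hS).1
          have htS := (mem_filter.1 hS).2
          exact ⟨notMem_erase _ _, by rwa [insert_erase htS]⟩
        · rintro ⟨h1, h2⟩
          refine mem_image.2 ⟨insert t T, mem_filter.2 ⟨h2, mem_insert_self _ _⟩, ?_⟩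
          exact erase_insert h1
      have hA1card : A1'.card = A1.card := by
        rw [hA1']
        apply card_image_of_injOn
        intro S hS T hT hST
        simp only at hST
        have h1 := (mem_filter.1 hS).2
        have h2 := (mem_filter.1 hT).2
        rw [← insert_erase h1, ← insert_erase h2, hST]
      -- properties of A0
      have hG0 : Grnd t A0 := by
        intro S hS a ha
        have h1 := mem_range.1 (hG S (mem_filter.1 hS).1 ha)
        have h2 : a ≠ t := fun h => (mem_filter.1 hS).2 (h ▸ ha)
        rw [mem_range]
        omega
      have hDC0 : DC A0 := by
        intro S hS T hTS
        refine mem_filter.2 ⟨hDC S (mem_filter.1 hS).1 T hTS, ?_⟩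
        exact fun h => (mem_filter.1 hS).2 (hTS h)
      have hSh0 : Shif A0 := by
        intro S hS j hj i hij hiS
        refine mem_filter.2 ⟨hSh S (mem_filter.1 hS).1 j hj i hij hiS, ?_⟩
        intro h
        rcases mem_insert.1 h with h' | h'
        · have hjlt : j < t := mem_range.1 (hG0 S hS hj)
          omega
        · exact (mem_filter.1 hS).2 (mem_of_mem_erase h')
      have hUB0 : UB d A0 := fun S hS T hT =>
        hUB S (mem_filter.1 hS).1 T (mem_filter.1 hT).1
      have hbound0 : A0.card ≤ Kb t d := IH t htn d A0 (by omega) hG0 hDC0 hSh0 hUB0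
      -- properties of A1'
      have hG1 : Grnd t A1' := by
        intro T hT a ha
        obtain ⟨h1, h2⟩ := (hA1'mem T).1 hT
        have h3 := mem_range.1 (hG _ h2 (mem_insert_of_mem ha))
        have h4 : a ≠ t := fun h => h1 (h ▸ ha)
        rw [mem_range]
        omega
      have hDC1 : DC A1' := by
        intro S hS T hTS
        obtain ⟨h1, h2⟩ := (hA1'mem S).1 hS
        refine (hA1'mem T).2 ⟨fun h => h1 (hTS h), ?_⟩
        exact hDC _ h2 _ (insert_subset_insert _ hTS)
      have hSh1 : Shif A1' := by
        intro S hS j hj i hij hiS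
        obtain ⟨h1, h2⟩ := (hA1'mem S).1 hS
        have hjt : j ≠ t := fun h => h1 (h ▸ hj)
        have hjlt : j < t := by
          have := mem_range.1 (hG1 S hS hj)
          omega
        have hit : i ≠ t := by omega
        have hstep := hSh _ h2 j (mem_insert_of_mem hj) i hij
          (fun h => (mem_insert.1 h).elim (fun h' => hit h') hiS)
        have hid : insert i ((insert t S).erase j) = insert t (insert i (S.erase j)) := by
          rw [Finset.erase_insert_of_ne (fun h => hjt h.symm)]
          ext a
          simp only [mem_insert]
          tauto
        rw [hid] at hstep
        refine (hA1'mem _).2 ⟨?_, hstep⟩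
        intro h
        rcases mem_insert.1 h with h' | h'
        · exact hit h'.symm
        · exact h1 (mem_of_mem_erase h')
      have hUB1 : UB (d - 2) A1' := by
        intro S hS T hT
        obtain ⟨hS1, hS2⟩ := (hA1'mem S).1 hS
        obtain ⟨hT1, hT2⟩ := (hA1'mem T).1 hT
        have htST : t ∉ S ∪ T := fun h => (mem_union.1 h).elim hS1 hT1
        have hstep1 : (S ∪ T).card + 1 ≤ d := by
          have h1 := hUB _ hS2 _ hT2
          have hid : insert t S ∪ insert t T = insert t (S ∪ T) := by
            ext a; simp only [mem_union, mem_insert]; tauto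
          rw [hid, card_insert_of_notMem htST] at h1
          omega
        have hSTsub : S ∪ T ⊆ Finset.range t := by
          intro a ha
          rcases mem_union.1 ha with h | h
          · exact hG1 S hS h
          · exact hG1 T hT h
        have hbig : 1 < (Finset.range t \ (S ∪ T)).card := by
          rw [card_sdiff_of_subset hSTsub, card_range]
          omega
        obtain ⟨x, hx, y, hy, hxy⟩ := Finset.one_lt_card.1 hbig
        have hxr := mem_sdiff.1 hx
        have hyr := mem_sdiff.1 hy
        have hxt := mem_range.1 hxr.1
        have hyt := mem_range.1 hyr.1
        -- insert x S ∈ A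
        have hxS : insert x S ∈ A := by
          have h1 := hSh _ hS2 t (mem_insert_self _ _) x hxt
            (fun h => (mem_insert.1 h).elim (fun h' => (by omega : x ≠ t) h')
              (fun h' => hxr.2 (mem_union_left _ h')))
          rwa [erase_insert hS1] at h1
        have hyT : insert y T ∈ A := by
          have h1 := hSh _ hT2 t (mem_insert_self _ _) y hyt
            (fun h => (mem_insert.1 h).elim (fun h' => (by omega : y ≠ t) h')
              (fun h' => hyr.2 (mem_union_right _ h')))
          rwa [erase_insert hT1] at h1
        have h2 := hUB _ hxS _ hyT
        have hid : insert x S ∪ insert y T = insert x (insert y (S ∪ T)) := by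
          ext a; simp only [mem_union, mem_insert]; tauto
        rw [hid] at h2
        have hyU : y ∉ S ∪ T := hyr.2
        have hxU : x ∉ insert y (S ∪ T) := by
          intro h
          rcases mem_insert.1 h with h' | h'
          · exact hxy h'
          · exact hxr.2 h'
        rw [card_insert_of_notMem hxU, card_insert_of_notMem hyU] at h2
        omega
      have hbound1 : A1'.card ≤ Kb t (d - 2) :=
        IH t htn (d - 2) A1' (by omega) hG1 hDC1 hSh1 hUB1
      have hrec := Kb_rec hd2 hdn2
      have hb0 : A0.card ≤ Kb (n - 1) d := hbound0
      have hb1 : A1'.card ≤ Kb (n - 1) (d - 2) := hbound1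
      omega

end SDProof

/-- If `d < n` are positive, `r = d % 2`, and `VC(𝒜 △ 𝒜) ≤ d`, then
`|𝒜| ≤ 2^r · ∑_{i=0}^{⌊d/2⌋} C(n−r, i)`. -/
theorem statement0 (n d : ℕ) (hd : 0 < d) (hdn : d < n)
    (A : Finset (Finset (Fin n)))
    (hVC : vcDim (Finset.image₂ (fun S T => symmDiff S T) A A) ≤ d) :
    A.card ≤ 2 ^ (d % 2) * ∑ i ∈ Finset.range (d / 2 + 1), (n - d % 2).choose i := by
  classical
  have hval : Function.Injective (Fin.val : Fin n → ℕ) := Fin.val_injective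
  set e : Finset (Fin n) → Finset ℕ := fun S => S.image Fin.val with he
  set An : SDProof.Fam := A.image e with hAn
  have heinj : Function.Injective e := Finset.image_injective hval
  have hcard : An.card = A.card := Finset.card_image_of_injective _ heinj
  have hsd : SDProof.sdF An = (Finset.image₂ (fun S T => symmDiff S T) A A).image e := by
    rw [hAn]
    unfold SDProof.sdF
    rw [Finset.image₂_image_left, Finset.image₂_image_right, Finset.image_image₂]
    exact Finset.image₂_congr (fun a _ b _ => (Finset.image_symmDiff a b hval).symm)
  have hshatFin : ∀ Y : Finset (Fin n),
      Shatters (Finset.image₂ (fun S T => symmDiff S T) A A) Y → Y.card ≤ d := by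
    intro Y hY
    have hmem : Y.card ∈ {m | ∃ Y' : Finset (Fin n),
        Shatters (Finset.image₂ (fun S T => symmDiff S T) A A) Y' ∧ Y'.card = m} :=
      ⟨Y, hY, rfl⟩
    have hbdd : BddAbove {m | ∃ Y' : Finset (Fin n),
        Shatters (Finset.image₂ (fun S T => symmDiff S T) A A) Y' ∧ Y'.card = m} := by
      refine ⟨n, ?_⟩
      rintro m ⟨Y', _, rfl⟩
      calc Y'.card ≤ (Finset.univ : Finset (Fin n)).card := Finset.card_le_univ _
        _ = n := by simp
    exact le_trans (le_csSup hbdd hmem) hVC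
  have hNS : SDProof.NoShat d (SDProof.sdF An) := by
    intro Y hY
    have hYlt : ∀ m ∈ Y, m < n := by
      intro m hm
      obtain ⟨W, hW, hWY⟩ := hY Y (fun a ha => ha)
      have hmW : m ∈ W := by
        have h1 : m ∈ W ∩ Y := by rw [hWY]; exact hm
        exact (Finset.mem_inter.1 h1).1
      rw [hsd] at hW
      obtain ⟨W₀, _, rfl⟩ := Finset.mem_image.1 hW
      obtain ⟨a, _, rfl⟩ := Finset.mem_image.1 hmW
      exact a.isLt
    have hims : (Y.attachFin hYlt).image Fin.val = Y := by
      ext m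
      simp only [Finset.mem_image]
      constructor
      · rintro ⟨a, ha, rfl⟩
        exact (Finset.mem_attachFin hYlt).1 ha
      · intro hm
        exact ⟨⟨m, hYlt m hm⟩, (Finset.mem_attachFin hYlt).2 hm, rfl⟩
    have hshat' : Shatters (Finset.image₂ (fun S T => symmDiff S T) A A) (Y.attachFin hYlt) := by
      intro T hT
      have hTY : T.image Fin.val ⊆ Y := by
        rw [← hims]
        exact Finset.image_subset_image hT
      obtain ⟨W, hW, hWtr⟩ := hY (T.image Fin.val) hTY
      rw [hsd] at hW
      obtain ⟨W₀, hW₀, rfl⟩ := Finset.mem_image.1 hW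
      refine ⟨W₀, hW₀, ?_⟩
      apply Finset.image_injective hval
      rw [Finset.image_inter _ _ hval, hims]
      exact hWtr
    have h1 := hshatFin _ hshat'
    have h2 : (Y.attachFin hYlt).card = Y.card := Finset.card_attachFin _ _
    omega
  have hG : SDProof.Grnd n An := by
    intro S hS
    rw [hAn] at hS
    obtain ⟨S₀, _, rfl⟩ := Finset.mem_image.1 hS
    intro a ha
    obtain ⟨b, _, rfl⟩ := Finset.mem_image.1 ha
    exact Finset.mem_range.2 b.isLt
  obtain ⟨B, hBDC, hBcard, hBNS, hBG⟩ :=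
    SDProof.toDC (∑ S ∈ An, S.card) An d n le_rfl hNS hG
  have hBUB := SDProof.dc_ub hBDC hBNS
  obtain ⟨C, hCSh, hCDC, hCcard, hCUB, hCG⟩ :=
    SDProof.toShift (∑ S ∈ B, ∑ x ∈ S, x) B d n le_rfl hBDC hBUB hBG
  have hfinal := SDProof.core n d C hdn hCG hCDC hCSh hCUB
  have hAC : A.card = C.card := by omega
  rw [hAC]
  exact hfinal
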